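/- Duality bound (intermediate step in the proof of the Aubin–Nitsche Lemma): Let V_h ⊆ V be a closed subspace, let u ∈ V satisfy a(u,v) = l(v) for all v ∈ V, and let u_h ∈ V_h satisfy a(u_h, v_h) = l(v_h) for all v_h ∈ V_h. Let w ∈ W and let v_w ∈ V satisfy the dual problem a(φ, v_w) = ⟨w, ι(φ)⟩_W for all φ ∈ V. Then for every v_h ∈ V_h one has |⟨w, ι(u) − ι(u_h)⟩_W| ≤ γ ‖u − u_h‖_V ‖v_w − v_h‖_V. -/

import Mathlib

theorem aubin_nitsche_duality_bound
    {V : Type*} [NormedAddCommGroup V] [InnerProductSpace ℝ V] [CompleteSpace V]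
    (a : V →ₗ[ℝ] V →ₗ[ℝ] ℝ) (l : V →L[ℝ] ℝ)
    (γ α : ℝ) (hγ : 0 < γ) (hα : 0 < α)
    (ha_symm : ∀ u v : V, a u v = a v u)
    (ha_cont : ∀ u v : V, |a u v| ≤ γ * ‖u‖ * ‖v‖)
    (ha_coer : ∀ u : V, α * ‖u‖ ^ 2 ≤ a u u)
    {W : Type*} [NormedAddCommGroup W] [InnerProductSpace ℝ W] [CompleteSpace W]
    (ι : V →L[ℝ] W) (hι : Function.Injective ι)
    (Vh : Submodule ℝ V) (hVh : IsClosed (Vh : Set V))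
    (u : V) (hu : ∀ v : V, a u v = l v)
    (uh : V) (huh : uh ∈ Vh) (huh_sol : ∀ vh ∈ Vh, a uh vh = l vh)
    (w : W) (vw : V) (hvw : ∀ φ : V, a φ vw = (inner ℝ w (ι φ) : ℝ)) :
    ∀ vh ∈ Vh, |(inner ℝ w (ι u - ι uh) : ℝ)| ≤ γ * ‖u - uh‖ * ‖vw - vh‖ := by
  intro vh hvh
  have key : (inner ℝ w (ι u - ι uh) : ℝ) = a (u - uh) (vw - vh) := by
    have h1 : (inner ℝ w (ι u - ι uh) : ℝ) = a (u - uh) vw := by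
      rw [← ι.map_sub, ← hvw]
    have h2 : a (u - uh) vh = 0 := by
      have := hu vh
      have := huh_sol vh hvh
      simp [map_sub, LinearMap.sub_apply, *]
    have h2' : (a u) vh - (a uh) vh = 0 := by simpa [map_sub, LinearMap.sub_apply] using h2
    rw [h1]
    simp [map_sub, LinearMap.sub_apply, h2']
  rw [key]
  exact ha_cont _ _
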